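/- For subsets A, B of a common well-order, the degree of the order type of A ∪ B equals the maximum of the degrees of the order types of A and B, where the degree of an ordinal is the exponent of the leading term of its Cantor normal form (and deg(0) is taken appropriately, assuming A and B are nonempty). -/

import Mathlib

open Ordinal
noncomputable def deg (a : Ordinal) : Ordinal := Ordinal.log omega0 a
noncomputable def oType {ι : Type*} [LinearOrder ι] [WellFoundedLT ι] (S : Set ι) : Ordinal :=
  Ordinal.type (Subrel ((· < ·) : ι → ι → Prop) (· ∈ S))
noncomputable def cnfSum (n : ℕ) (e : Fin n → Ordinal) (c : Fin n → ℕ) : Ordinal :=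
  (List.ofFn fun i => omega0 ^ (e i) * (c i)).sum
noncomputable def omegaSum (o : ℕ → Ordinal) : Ordinal :=
  ⨆ n, (List.ofFn fun i : Fin n => o i).sum

noncomputable def nadd (a b : Ordinal.{u}) : Ordinal.{u} :=
  max (⨆ x : Set.Iio a, Order.succ (nadd x.1 b)) (⨆ y : Set.Iio b, Order.succ (nadd a y.1))
termination_by (a, b)
decreasing_by
  · exact Prod.Lex.left _ _ x.2
  · exact Prod.Lex.right _ y.2

infixl:65 " ♯ " => nadd

theorem nadd_le_iff {a b c : Ordinal} :
    a ♯ b ≤ c ↔ (∀ a' < a, a' ♯ b < c) ∧ ∀ b' < b, a ♯ b' < c := by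
  rw [nadd, max_le_iff, Ordinal.iSup_le_iff, Ordinal.iSup_le_iff]
  simp only [Order.succ_le_iff, Subtype.forall, Set.mem_Iio]

theorem nadd_lt_nadd_right {a b : Ordinal} (h : a < b) (c : Ordinal) : a ♯ c < b ♯ c :=
  (nadd_le_iff.1 le_rfl).1 a h

theorem nadd_lt_nadd_left {b c : Ordinal} (h : b < c) (a : Ordinal) : a ♯ b < a ♯ c :=
  (nadd_le_iff.1 le_rfl).2 b h

theorem nadd_le_nadd_right {a b : Ordinal} (h : a ≤ b) (c : Ordinal) : a ♯ c ≤ b ♯ c := by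
  rcases h.lt_or_eq with h | rfl
  · exact (nadd_lt_nadd_right h c).le
  · exact le_rfl

theorem nadd_le_nadd_left {b c : Ordinal} (h : b ≤ c) (a : Ordinal) : a ♯ b ≤ a ♯ c := by
  rcases h.lt_or_eq with h | rfl
  · exact (nadd_lt_nadd_left h a).le
  · exact le_rfl

theorem nadd_lt_nadd_of_lt_of_le {a b c d : Ordinal} (h₁ : a < b) (h₂ : c ≤ d) :
    a ♯ c < b ♯ d :=
  (nadd_lt_nadd_right h₁ c).trans_le (nadd_le_nadd_left h₂ b)

theorem nadd_lt_nadd_of_le_of_lt {a b c d : Ordinal} (h₁ : a ≤ b) (h₂ : c < d) :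
    a ♯ c < b ♯ d :=
  (nadd_le_nadd_right h₁ c).trans_lt (nadd_lt_nadd_left h₂ b)

theorem nadd_comm (a b : Ordinal) : a ♯ b = b ♯ a := by
  induction a using Ordinal.induction generalizing b with
  | _ a IHa =>
  induction b using Ordinal.induction with
  | _ b IHb =>
  apply le_antisymm
  · rw [nadd_le_iff]
    constructor
    · intro a' ha
      rw [IHa a' ha]
      exact nadd_lt_nadd_left ha b
    · intro b' hb
      rw [IHb b' hb]
      exact nadd_lt_nadd_right hb a
  · rw [nadd_le_iff]
    constructor
    · intro b' hb
      rw [← IHb b' hb]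
      exact nadd_lt_nadd_left hb a
    · intro a' ha
      rw [← IHa a' ha]
      exact nadd_lt_nadd_right ha b

@[simp]
theorem nadd_zero (a : Ordinal) : a ♯ 0 = a := by
  induction a using Ordinal.induction with
  | _ a IH =>
  apply le_antisymm
  · rw [nadd_le_iff]
    refine ⟨fun a' ha => by rw [IH a' ha]; exact ha, fun b' hb => by simp at hb⟩
  · by_contra h
    push_neg at h
    have := nadd_lt_nadd_right h 0
    rw [IH _ h] at this
    exact lt_irrefl _ this

/-! ### Natural addition is principal below `ω ^ δ` -/

lemma nadd_decomp_le (W : Ordinal) (hW0 : W ≠ 0)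
    (hδ : ∀ x y, x < W → y < W → x ♯ y < W) :
    ∀ (μ : Ordinal) (q p : ℕ) (r s : Ordinal), r < W → s < W →
      W * ((q : Ordinal) + p) + (r ♯ s) ≤ μ →
      (W * q + r) ♯ (W * p + s) ≤ W * ((q : Ordinal) + p) + (r ♯ s) := by
  intro μ
  induction μ using Ordinal.induction with
  | _ μ IH =>
  have key : ∀ (q p : ℕ) (r s : Ordinal), r < W → s < W →
      W * ((q : Ordinal) + p) + (r ♯ s) ≤ μ →
      ∀ x < W * q + r, x ♯ (W * p + s) < W * ((q : Ordinal) + p) + (r ♯ s) := by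
    intro q p r s hr hs hμ x hx
    have hxdec : W * (x / W) + x % W = x := Ordinal.div_add_mod x W
    have hr'W : x % W < W := Ordinal.mod_lt x hW0
    have hq'le : x / W ≤ (q : Ordinal) := by
      have h1 : x < W * ((q : Ordinal) + 1) := by
        rw [mul_add, mul_one]
        exact hx.trans_le (add_le_add_right hr.le _)
      have h2 := (Ordinal.div_lt hW0).2 h1
      rwa [Ordinal.add_one_eq_succ, Order.lt_succ_iff] at h2
    obtain ⟨q'', hq''⟩ := Ordinal.lt_omega0.1 (hq'le.trans_lt (nat_lt_omega0 q))
    rcases lt_or_eq_of_le hq'le with hlt | heq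
    · -- x / W < q
      have hq''q : q'' < q := by rw [hq''] at hlt; exact_mod_cast hlt
      have bound1 : W * ((q'' : Ordinal) + p) + (x % W ♯ s) < W * ((q : Ordinal) + p) := by
        calc W * ((q'' : Ordinal) + p) + (x % W ♯ s)
            < W * ((q'' : Ordinal) + p) + W := add_lt_add_right (hδ _ _ hr'W hs) _
          _ = W * ((q'' : Ordinal) + p + 1) := by
              rw [mul_add W ((q'' : Ordinal) + p) 1, mul_one]
          _ ≤ W * ((q : Ordinal) + p) := by
              apply mul_le_mul_right
              have h3 : ((q'' + p + 1 : ℕ) : Ordinal) ≤ ((q + p : ℕ) : Ordinal) := by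
                rw [Nat.cast_le]; omega
              push_cast at h3
              exact h3
      have bound2 : W * ((q'' : Ordinal) + p) + (x % W ♯ s) < μ :=
        (bound1.trans_le (le_self_add)).trans_le hμ
      have h4 := IH _ bound2 q'' p (x % W) s hr'W hs le_rfl
      rw [hq''] at hxdec
      rw [hxdec] at h4
      exact h4.trans_lt (bound1.trans_le (le_self_add))
    · -- x / W = q, so x % W < r
      have hr'r : x % W < r := by
        have hx' : W * (q : Ordinal) + x % W < W * (q : Ordinal) + r := by
          rw [← heq, hxdec, heq]
          exact hx
        exact (add_lt_add_iff_left _).1 hx'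
      have bound1 : W * ((q : Ordinal) + p) + (x % W ♯ s) <
          W * ((q : Ordinal) + p) + (r ♯ s) :=
        add_lt_add_right (nadd_lt_nadd_right hr'r s) _
      have bound2 : W * ((q : Ordinal) + p) + (x % W ♯ s) < μ := bound1.trans_le hμ
      have h4 := IH _ bound2 q p (x % W) s hr'W hs le_rfl
      rw [heq] at hxdec
      rw [hxdec] at h4
      exact h4.trans_lt bound1
  intro q p r s hr hs hμ
  rw [nadd_le_iff]
  constructor
  · exact key q p r s hr hs hμ
  · intro x hx
    rw [nadd_comm]
    have hcomm : W * ((p : Ordinal) + q) + (s ♯ r) = W * ((q : Ordinal) + p) + (r ♯ s) := by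
      rw [← Nat.cast_add, ← Nat.cast_add, Nat.add_comm p q, nadd_comm s r]
    have := key p q s r hs hr (hcomm ▸ hμ) x hx
    rwa [hcomm] at this

lemma principal_nadd_omega0_opow (δ : Ordinal) :
    ∀ x y, x < omega0 ^ δ → y < omega0 ^ δ → x ♯ y < omega0 ^ δ := by
  induction δ using Ordinal.induction with
  | _ δ IH =>
  rcases Ordinal.zero_or_succ_or_isSuccLimit δ with h0 | ⟨δ', rfl⟩ | hl
  · subst h0
    intro x y hx hy
    rw [opow_zero, Ordinal.lt_one_iff_zero] at hx hy
    subst hx; subst hy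
    simpa [opow_zero] using Ordinal.zero_lt_one
  · intro x y hx hy
    rw [opow_succ] at hx hy ⊢
    obtain ⟨m', hm', hxm⟩ := (lt_mul_iff_of_isSuccLimit isSuccLimit_omega0).1 hx
    obtain ⟨n', hn', hyn⟩ := (lt_mul_iff_of_isSuccLimit isSuccLimit_omega0).1 hy
    obtain ⟨m, rfl⟩ := Ordinal.lt_omega0.1 hm'
    obtain ⟨n, rfl⟩ := Ordinal.lt_omega0.1 hn'
    set W := omega0 ^ δ' with hWdef
    have hW0 : W ≠ 0 := (opow_pos δ' omega0_pos).ne'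
    have hδ' := IH δ' (Order.lt_succ δ')
    have hxd : W * (x / W) + x % W = x := Ordinal.div_add_mod x W
    have hyd : W * (y / W) + y % W = y := Ordinal.div_add_mod y W
    have hxq : x / W < (m : Ordinal) := (Ordinal.div_lt hW0).2 hxm
    have hyq : y / W < (n : Ordinal) := (Ordinal.div_lt hW0).2 hyn
    obtain ⟨q, hq⟩ := Ordinal.lt_omega0.1 (hxq.trans (nat_lt_omega0 m))
    obtain ⟨p, hp⟩ := Ordinal.lt_omega0.1 (hyq.trans (nat_lt_omega0 n))
    have hxr : x % W < W := Ordinal.mod_lt x hW0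
    have hyr : y % W < W := Ordinal.mod_lt y hW0
    have h := nadd_decomp_le W hW0 hδ' (W * ((q : Ordinal) + p) + (x % W ♯ y % W))
      q p (x % W) (y % W) hxr hyr le_rfl
    rw [hq] at hxd
    rw [hp] at hyd
    rw [hxd, hyd] at h
    calc x ♯ y ≤ W * ((q : Ordinal) + p) + (x % W ♯ y % W) := h
      _ < W * ((q : Ordinal) + p) + W := add_lt_add_right (hδ' _ _ hxr hyr) _
      _ = W * ((q : Ordinal) + p + 1) := by
          rw [mul_add W ((q : Ordinal) + p) 1, mul_one]
      _ < W * omega0 := by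
          apply mul_lt_mul_of_pos_left _ (opow_pos δ' omega0_pos)
          have : ((q + p + 1 : ℕ) : Ordinal) < omega0 := nat_lt_omega0 _
          push_cast at this
          exact this
  · intro x y hx hy
    obtain ⟨δ₁, hδ₁, hx₁⟩ := (Ordinal.lt_opow_of_isSuccLimit omega0_ne_zero hl).1 hx
    obtain ⟨δ₂, hδ₂, hy₂⟩ := (Ordinal.lt_opow_of_isSuccLimit omega0_ne_zero hl).1 hy
    have h1 : x < omega0 ^ max δ₁ δ₂ :=
      hx₁.trans_le (opow_le_opow_right omega0_pos (le_max_left _ _))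
    have h2 : y < omega0 ^ max δ₁ δ₂ :=
      hy₂.trans_le (opow_le_opow_right omega0_pos (le_max_right _ _))
    have h3 := IH (max δ₁ δ₂) (max_lt hδ₁ hδ₂) x y h1 h2
    exact h3.trans_le (opow_le_opow_right omega0_pos (max_lt hδ₁ hδ₂).le)

/-! ### Order types of subsets -/

lemma oType_mono {ι : Type*} [LinearOrder ι] [WellFoundedLT ι] {S T : Set ι}
    (h : S ⊆ T) : oType S ≤ oType T := by
  rw [oType, oType, Ordinal.type_le_iff']
  exact ⟨⟨⟨Set.inclusion h, Set.inclusion_injective h⟩, Iff.rfl⟩⟩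

lemma oType_sep_lt {ι : Type*} [LinearOrder ι] [WellFoundedLT ι] {T : Set ι} {x : ι}
    (hx : x ∈ T) : oType {y ∈ T | y < x} < oType T := by
  have h := Ordinal.typein_lt_type (Subrel ((· < ·) : ι → ι → Prop) (· ∈ T)) ⟨x, hx⟩
  rw [← Ordinal.type_subrel] at h
  refine lt_of_eq_of_lt ?_ h
  rw [oType, Ordinal.type_eq]
  exact ⟨⟨⟨fun y => ⟨⟨y.1, y.2.1⟩, y.2.2⟩, fun b => ⟨b.1.1, b.1.2, b.2⟩,
    fun y => rfl, fun b => rfl⟩, Iff.rfl⟩⟩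

lemma type_le_of_strictMono {α : Type*} {r : α → α → Prop} [IsWellOrder α r]
    (g : α → Ordinal) (hg : ∀ a b, r a b → g a < g b) (c : Ordinal)
    (hc : ∀ a, g a < c) : Ordinal.type r ≤ c := by
  by_contra hcon
  push_neg at hcon
  have H : ∀ x : α, Ordinal.typein r x ≤ g x := by
    intro x
    induction x using (IsWellFounded.wf (r := r)).induction with
    | _ x IH =>
    by_contra hlt
    push_neg at hlt
    obtain ⟨y, hy⟩ := Ordinal.typein_surj r (hlt.trans (Ordinal.typein_lt_type r x))
    have hyx : r y x := (Ordinal.typein_lt_typein r).1 (hy ▸ hlt)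
    have := (IH y hyx).trans_lt (hg y x hyx)
    rw [hy] at this
    exact absurd this (lt_irrefl _)
  obtain ⟨x, hx⟩ := Ordinal.typein_surj r hcon
  exact absurd ((hx ▸ H x).trans_lt (hc x)) (lt_irrefl _)

lemma oType_union_le {ι : Type*} [LinearOrder ι] [WellFoundedLT ι] (A B : Set ι) :
    oType (A ∪ B) ≤ oType A ♯ oType B := by
  rw [oType]
  apply type_le_of_strictMono
    (g := fun x : ↥(A ∪ B) => oType {y ∈ A | y < x.1} ♯ oType {y ∈ B | y < x.1})
  · intro a b hab
    have habs : (a : ι) < (b : ι) := hab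
    have hAle : oType {y ∈ A | y < a.1} ≤ oType {y ∈ A | y < b.1} :=
      oType_mono (fun y hy => ⟨hy.1, hy.2.trans habs⟩)
    have hBle : oType {y ∈ B | y < a.1} ≤ oType {y ∈ B | y < b.1} :=
      oType_mono (fun y hy => ⟨hy.1, hy.2.trans habs⟩)
    rcases a.2 with ha | ha
    · refine nadd_lt_nadd_of_lt_of_le ?_ hBle
      have heq : {y ∈ A | y < a.1} = {y ∈ {y ∈ A | y < b.1} | y < a.1} := by
        ext y
        exact ⟨fun hy => ⟨⟨hy.1, hy.2.trans habs⟩, hy.2⟩, fun hy => ⟨hy.1.1, hy.2⟩⟩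
      rw [heq]
      exact oType_sep_lt ⟨ha, habs⟩
    · refine nadd_lt_nadd_of_le_of_lt hAle ?_
      have heq : {y ∈ B | y < a.1} = {y ∈ {y ∈ B | y < b.1} | y < a.1} := by
        ext y
        exact ⟨fun hy => ⟨⟨hy.1, hy.2.trans habs⟩, hy.2⟩, fun hy => ⟨hy.1.1, hy.2⟩⟩
      rw [heq]
      exact oType_sep_lt ⟨ha, habs⟩
  · intro a
    have hAle : oType {y ∈ A | y < a.1} ≤ oType A := oType_mono (fun y hy => hy.1)
    have hBle : oType {y ∈ B | y < a.1} ≤ oType B := oType_mono (fun y hy => hy.1)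
    rcases a.2 with ha | ha
    · exact nadd_lt_nadd_of_lt_of_le (oType_sep_lt ha) hBle
    · exact nadd_lt_nadd_of_le_of_lt hAle (oType_sep_lt ha)

theorem deg_union {ι : Type*} [LinearOrder ι] [WellFoundedLT ι]
    (A B : Set ι) (hA : A.Nonempty) (hB : B.Nonempty) :
    deg (oType (A ∪ B)) = max (deg (oType A)) (deg (oType B)) := by
  apply le_antisymm
  · set d := max (deg (oType A)) (deg (oType B)) with hd
    have hAlt : oType A < omega0 ^ (d + 1) := by
      have h := Ordinal.lt_opow_succ_log_self one_lt_omega0 (oType A)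
      rw [← Ordinal.add_one_eq_succ] at h
      exact h.trans_le (opow_le_opow_right omega0_pos
        (add_le_add_left (le_max_left _ _) 1))
    have hBlt : oType B < omega0 ^ (d + 1) := by
      have h := Ordinal.lt_opow_succ_log_self one_lt_omega0 (oType B)
      rw [← Ordinal.add_one_eq_succ] at h
      exact h.trans_le (opow_le_opow_right omega0_pos
        (add_le_add_left (le_max_right _ _) 1))
    have hU : oType (A ∪ B) < omega0 ^ (d + 1) :=
      (oType_union_le A B).trans_lt
        (principal_nadd_omega0_opow (d + 1) _ _ hAlt hBlt)
    have hne : oType (A ∪ B) ≠ 0 := by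
      rw [oType, Ordinal.type_ne_zero_iff_nonempty]
      exact ⟨⟨hA.choose, Or.inl hA.choose_spec⟩⟩
    have := (Ordinal.lt_opow_iff_log_lt one_lt_omega0 hne).1 hU
    rwa [Ordinal.add_one_eq_succ, Order.lt_succ_iff] at this
  · exact max_le (Ordinal.log_mono_right _ (oType_mono Set.subset_union_left))
      (Ordinal.log_mono_right _ (oType_mono Set.subset_union_right))
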